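/- Let n ≥ 2, p ∈ (1,∞), and let z ∈ ∂K_q^{n+1} \ {0} (with 1/p+1/q=1) be such that the index set J_z = {i : z̄_i ≠ 0} is a proper subset of {1,...,n}. Let F_z = {z}^⊥ ∩ K_p^{n+1} = {t·f : t ≥ 0} with f = (1, -sgn(z̄)∘|z₀⁻¹z̄|^(q-1)). Then there exists a continuous function w : (0,1] → {z}^⊥ \ F_z with lim_{ε↓0} w_ε = f and limsup_{ε↓0} dist(w_ε, K_p^{n+1})^(1/p) / dist(w_ε, F_z) ≤ (1/p)^(1/p) < ∞. -/

import Mathlib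

open scoped RealInnerProductSpace

lemma aux_sign_mul (x : ℝ) : Real.sign x * x = |x| := by
  rcases lt_trichotomy x 0 with h | h | h
  · rw [Real.sign_of_neg h, abs_of_neg h]; ring
  · simp [h]
  · rw [Real.sign_of_pos h, abs_of_pos h]; ring

lemma aux_abs_le_norm {m : ℕ} (v : EuclideanSpace ℝ (Fin m)) (i : Fin m) :
    |v i| ≤ ‖v‖ := by
  rw [EuclideanSpace.norm_eq, ← Real.sqrt_sq_eq_abs]
  apply Real.sqrt_le_sqrt
  have h : v i ^ 2 = ‖v i‖ ^ 2 := by rw [Real.norm_eq_abs, sq_abs]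
  rw [h]
  exact Finset.single_le_sum (fun k _ => sq_nonneg ‖v k‖) (Finset.mem_univ i)

theorem stmt_11 (n : ℕ) (hn : 2 ≤ n) (p q : ℝ) (hp : 1 < p) (hq : 1 < q)
    (hpq : 1 / p + 1 / q = 1)
    (z : EuclideanSpace ℝ (Fin (n + 1)))
    (hz0 : z 0 = (∑ i : Fin n, |z i.succ| ^ q) ^ (1 / q)) (hz0pos : 0 < z 0)
    (hJ : ∃ j : Fin n, z j.succ = 0)
    (f : EuclideanSpace ℝ (Fin (n + 1))) (hf0 : f 0 = 1)
    (hfi : ∀ i : Fin n, f i.succ = -Real.sign (z i.succ) * |(z 0)⁻¹ * z i.succ| ^ (q - 1)) :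
    let Kp : Set (EuclideanSpace ℝ (Fin (n + 1))) :=
      {x | (∑ i : Fin n, |x i.succ| ^ p) ^ (1 / p) ≤ x 0}
    let Fz : Set (EuclideanSpace ℝ (Fin (n + 1))) := {x | ∃ t : ℝ, 0 ≤ t ∧ x = t • f}
    ∃ w : ℝ → EuclideanSpace ℝ (Fin (n + 1)),
      ContinuousOn w (Set.Ioc 0 1) ∧
      (∀ ε ∈ Set.Ioc (0 : ℝ) 1, ⟪w ε, z⟫ = 0 ∧ w ε ∉ Fz) ∧
      Filter.Tendsto w (nhdsWithin 0 (Set.Ioi 0)) (nhds f) ∧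
      Filter.limsup
        (fun ε => Metric.infDist (w ε) Kp ^ (1 / p) / Metric.infDist (w ε) Fz)
        (nhdsWithin 0 (Set.Ioi 0)) ≤ (1 / p) ^ (1 / p) := by
  intro Kp Fz
  obtain ⟨j, hjz⟩ := hJ
  have hp0 : (0:ℝ) < p := lt_trans one_pos hp
  have hq0 : (0:ℝ) < q := lt_trans one_pos hq
  have hpq' : q + p = p * q := by field_simp at hpq; linarith
  have hqp : (q - 1) * p = q := by nlinarith
  set z0 := z 0 with hz0def
  set S := (∑ i : Fin n, |z i.succ| ^ q) with hSdef
  have hSnn : 0 ≤ S := Finset.sum_nonneg fun i _ => Real.rpow_nonneg (abs_nonneg _) q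
  have hS : z0 ^ q = S := by
    rw [hz0, ← Real.rpow_mul hSnn, one_div_mul_cancel (ne_of_gt hq0), Real.rpow_one]
  have hfj : f j.succ = 0 := by rw [hfi j, hjz]; simp
  have hfabs : ∀ i : Fin n, |f i.succ| = (|z i.succ| / z0) ^ (q - 1) := by
    intro i
    rcases eq_or_ne (z i.succ) 0 with h | h
    · rw [hfi i, h]
      simp [Real.zero_rpow (by linarith : q - 1 ≠ 0)]
    · have hsabs : |Real.sign (z i.succ)| = 1 := by
        rcases Real.sign_apply_eq_of_ne_zero _ h with hs | hs <;> rw [hs] <;> norm_num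
      rw [hfi i, neg_mul, abs_neg, abs_mul, hsabs, one_mul,
        abs_of_nonneg (Real.rpow_nonneg (abs_nonneg _) _), abs_mul, abs_inv,
        abs_of_pos hz0pos, inv_mul_eq_div]
  have hfabsp : ∀ i : Fin n, |f i.succ| ^ p = (|z i.succ| / z0) ^ q := by
    intro i
    rw [hfabs i, ← Real.rpow_mul (div_nonneg (abs_nonneg _) hz0pos.le), hqp]
  have hsum : ∑ i : Fin n, |f i.succ| ^ p = 1 := by
    calc ∑ i : Fin n, |f i.succ| ^ p = ∑ i : Fin n, |z i.succ| ^ q / z0 ^ q := by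
          refine Finset.sum_congr rfl fun i _ => ?_
          rw [hfabsp i, Real.div_rpow (abs_nonneg _) hz0pos.le]
      _ = S / z0 ^ q := by rw [← Finset.sum_div]
      _ = 1 := by rw [← hS, div_self (ne_of_gt (Real.rpow_pos_of_pos hz0pos q))]
  have hinner : ⟪f, z⟫ = 0 := by
    rw [PiLp.inner_apply]
    simp only [RCLike.inner_apply, conj_trivial]
    rw [Fin.sum_univ_succ, hf0, mul_one]
    have hterm : ∀ i : Fin n, f i.succ * z i.succ = -(|z i.succ| ^ q / z0 ^ (q - 1)) := by
      intro i
      rw [hfi i, abs_mul, abs_inv, abs_of_pos hz0pos, neg_mul, neg_mul, neg_inj, inv_mul_eq_div,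
        Real.div_rpow (abs_nonneg _) hz0pos.le]
      rw [mul_comm (Real.sign (z i.succ)), mul_assoc, aux_sign_mul, div_mul_eq_mul_div]
      congr 1
      calc |z i.succ| ^ (q - 1) * |z i.succ|
          = |z i.succ| ^ (q - 1) * |z i.succ| ^ (1 : ℝ) := by rw [Real.rpow_one]
        _ = |z i.succ| ^ (q - 1 + 1) :=
            (Real.rpow_add' (abs_nonneg _) (by simpa using hq0.ne')).symm
        _ = |z i.succ| ^ q := by ring_nf
    rw [Finset.sum_congr rfl fun i _ => (mul_comm _ _).trans (hterm i), Finset.sum_neg_distrib, ← Finset.sum_div,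
      ← hSdef, ← hS, ← Real.rpow_sub hz0pos]
    norm_num
    exact add_neg_cancel _
  -- the curve
  set w : ℝ → EuclideanSpace ℝ (Fin (n + 1)) :=
    fun ε => f + ε • EuclideanSpace.single j.succ (1:ℝ) with hwdef
  have hw0 : ∀ ε : ℝ, w ε 0 = 1 := by
    intro ε
    simp [hwdef, hf0, EuclideanSpace.single_apply, (Fin.succ_ne_zero j).symm]
  have hwj : ∀ ε : ℝ, w ε j.succ = ε := by
    intro ε
    simp [hwdef, hfj, EuclideanSpace.single_apply]
  have hwi : ∀ (ε : ℝ) (i : Fin n), i ≠ j → w ε i.succ = f i.succ := by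
    intro ε i hij
    simp [hwdef, EuclideanSpace.single_apply, Fin.succ_injective _ |>.ne hij]
  have hcont : Continuous w := by
    apply continuous_const.add
    exact continuous_id.smul continuous_const
  -- membership conditions
  have hwsum : ∀ ε : ℝ, 0 < ε → ∑ i : Fin n, |w ε i.succ| ^ p = 1 + ε ^ p := by
    intro ε hε
    have : ∀ i : Fin n, |w ε i.succ| ^ p = |f i.succ| ^ p + (if i = j then ε ^ p else 0) := by
      intro i
      rcases eq_or_ne i j with rfl | h
      · rw [hwj, hfj, abs_of_pos hε]
        simp [Real.zero_rpow hp0.ne']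
      · simp [hwi ε i h, h]
    rw [Finset.sum_congr rfl fun i _ => this i, Finset.sum_add_distrib, hsum,
      Finset.sum_ite_eq' Finset.univ j (fun _ => ε ^ p)]
    simp
  have hFzne : Fz.Nonempty := ⟨0, 0, le_refl 0, by simp⟩
  -- lower bound for distance to Fz
  have hlow : ∀ ε : ℝ, 0 < ε → ε ≤ Metric.infDist (w ε) Fz := by
    intro ε hε
    by_contra hcon
    push_neg at hcon
    obtain ⟨y, hy, hdy⟩ := (Metric.infDist_lt_iff hFzne).mp hcon
    obtain ⟨t, ht, rfl⟩ := hy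
    have h1 : |(w ε - t • f) j.succ| ≤ dist (w ε) (t • f) := by
      rw [dist_eq_norm]
      exact aux_abs_le_norm _ _
    have h2 : (w ε - t • f) j.succ = ε := by
      simp [hwj, hfj]
    rw [h2, abs_of_pos hε] at h1
    linarith
  -- upper bound for distance to Kp
  have hup : ∀ ε : ℝ, 0 < ε → Metric.infDist (w ε) Kp ≤ ε ^ p / p := by
    intro ε hε
    set δ := (1 + ε ^ p) ^ (1 / p) - 1 with hδdef
    have hεp : (0:ℝ) < ε ^ p := Real.rpow_pos_of_pos hε p
    have hδnn : 0 ≤ δ := by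
      have h1 : (1:ℝ) ≤ (1 + ε ^ p) ^ (1 / p) :=
        Real.one_le_rpow (by linarith) (by positivity)
      show (0:ℝ) ≤ (1 + ε ^ p) ^ (1 / p) - 1
      linarith
    set y : EuclideanSpace ℝ (Fin (n + 1)) := w ε + δ • EuclideanSpace.single 0 (1:ℝ) with hydef
    have hyK : y ∈ Kp := by
      show (∑ i : Fin n, |y i.succ| ^ p) ^ (1 / p) ≤ y 0
      have hy0 : y 0 = (1 + ε ^ p) ^ (1 / p) := by
        simp [hydef, hw0, EuclideanSpace.single_apply, hδdef]
      have hyi : ∀ i : Fin n, y i.succ = w ε i.succ := by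
        intro i
        simp [hydef, EuclideanSpace.single_apply, Fin.succ_ne_zero i]
      rw [hy0, Finset.sum_congr rfl fun i _ => by rw [hyi i], hwsum ε hε]
    have hdist : dist (w ε) y = δ := by
      rw [dist_eq_norm, hydef]
      simp [norm_smul, abs_of_nonneg hδnn, EuclideanSpace.norm_single]
    have hδle : δ ≤ ε ^ p / p := by
      have hsnn : (0:ℝ) ≤ ε ^ p / p := by positivity
      have hber : 1 + ε ^ p ≤ (1 + ε ^ p / p) ^ p := by
        have := one_add_mul_self_le_rpow_one_add
          (s := ε ^ p / p) (by linarith) (le_of_lt hp)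
        calc 1 + ε ^ p = 1 + p * (ε ^ p / p) := by field_simp
          _ ≤ (1 + ε ^ p / p) ^ p := this
      have h1 : (1 + ε ^ p) ^ (1 / p) ≤ ((1 + ε ^ p / p) ^ p) ^ (1 / p) :=
        Real.rpow_le_rpow (by positivity) hber (by positivity)
      rw [← Real.rpow_mul (by positivity), mul_one_div_cancel hp0.ne', Real.rpow_one] at h1
      show (1 + ε ^ p) ^ (1 / p) - 1 ≤ ε ^ p / p
      linarith
    calc Metric.infDist (w ε) Kp ≤ dist (w ε) y := Metric.infDist_le_dist_of_mem hyK
      _ = δ := hdist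
      _ ≤ ε ^ p / p := hδle
  -- the ratio bound
  have hkey : ∀ ε : ℝ, 0 < ε →
      Metric.infDist (w ε) Kp ^ (1 / p) / Metric.infDist (w ε) Fz ≤ (1 / p) ^ (1 / p) := by
    intro ε hε
    have hc : (ε ^ p / p) ^ (1 / p) = ε * (1 / p) ^ (1 / p) := by
      rw [div_eq_mul_one_div, Real.mul_rpow (by positivity) (by positivity),
        ← Real.rpow_mul hε.le, mul_one_div_cancel hp0.ne', Real.rpow_one]
    have h1 : Metric.infDist (w ε) Kp ^ (1 / p) ≤ ε * (1 / p) ^ (1 / p) := by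
      rw [← hc]
      exact Real.rpow_le_rpow Metric.infDist_nonneg (hup ε hε) (by positivity)
    calc Metric.infDist (w ε) Kp ^ (1 / p) / Metric.infDist (w ε) Fz
        ≤ ε * (1 / p) ^ (1 / p) / ε :=
          div_le_div₀ (by positivity) h1 hε (hlow ε hε)
      _ = (1 / p) ^ (1 / p) := by rw [mul_comm, mul_div_assoc, div_self hε.ne', mul_one]
  refine ⟨w, hcont.continuousOn, ?_, ?_, ?_⟩
  · intro ε hε
    constructor
    · rw [hwdef]
      simp only
      rw [inner_add_left, hinner, real_inner_smul_left, EuclideanSpace.inner_single_left]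
      simp [hjz]
    · rintro ⟨t, ht, hEq⟩
      have h0 := congrArg (fun v : EuclideanSpace ℝ (Fin (n + 1)) => v 0) hEq
      have hjc := congrArg (fun v : EuclideanSpace ℝ (Fin (n + 1)) => v j.succ) hEq
      simp only [hw0, hwj, PiLp.smul_apply, smul_eq_mul, hf0, mul_one, hfj, mul_zero] at h0 hjc
      exact absurd hjc (ne_of_gt hε.1)
  · have h0 : w 0 = f := by simp [hwdef]
    have := hcont.tendsto 0
    rw [h0] at this
    exact this.mono_left nhdsWithin_le_nhds
  · apply Filter.limsup_le_of_le
    · exact Filter.isCoboundedUnder_le_of_le (nhdsWithin 0 (Set.Ioi 0)) (x := 0)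
        fun ε => div_nonneg (Real.rpow_nonneg Metric.infDist_nonneg _) Metric.infDist_nonneg
    · filter_upwards [self_mem_nhdsWithin] with ε hε
      exact hkey ε hε
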